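/- arXiv:0806.3260 — 3 statements merged into one kernel-verified Lean document; each statement's English description precedes it below -/
import Mathlib

section
/- Let A be an n×n complex normal matrix, let r₀ ∈ ℂⁿ, and let m ≥ 1. Suppose p ∈ ℂ[z] with deg p ≤ m and p(0) = 1 satisfies ‖p(A) r₀‖ ≤ ‖q(A) r₀‖ for every polynomial q with deg q ≤ m and q(0) = 1 (i.e., p is a GMRES minimizing polynomial for A and r₀). Then the conjugated polynomial p̄ is a GMRES minimizing polynomial for Aᴴ and r₀: deg p̄ ≤ m, p̄(0) = 1, and ‖p̄(Aᴴ) r₀‖ ≤ ‖q(Aᴴ) r₀‖ for every polynomial q with deg q ≤ m and q(0) = 1. -/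
open Polynomial Matrix

/-- The Euclidean (ℓ²) norm of a vector in ℂⁿ. -/
noncomputable def euclNorm {n : ℕ} (v : Fin n → ℂ) : ℝ :=
  ‖(WithLp.equiv 2 (Fin n → ℂ)).symm v‖

/-- `s` is a GMRES(m) residual of `A` from `r`: there is a polynomial `p` of degree at most `m`
with `p 0 = 1` such that `s = p(A) r` and `‖s‖ ≤ ‖q(A) r‖` for all admissible `q`. -/
def IsGMRESResidual {n : ℕ} (m : ℕ) (A : Matrix (Fin n) (Fin n) ℂ)
    (r s : Fin n → ℂ) : Prop :=
  ∃ p : ℂ[X], p.natDegree ≤ m ∧ p.eval 0 = 1 ∧ s = (aeval A p).mulVec r ∧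
    ∀ q : ℂ[X], q.natDegree ≤ m → q.eval 0 = 1 →
      euclNorm s ≤ euclNorm ((aeval A q).mulVec r)

/-- The Krylov matrix `K(A, r) = [r, Ar, …, Aᵐ r]`, an `n × (m+1)` matrix. -/
noncomputable def krylov {n : ℕ} (m : ℕ) (A : Matrix (Fin n) (Fin n) ℂ) (r : Fin n → ℂ) :
    Matrix (Fin n) (Fin (m + 1)) ℂ :=
  Matrix.of fun i j => (A ^ (j : ℕ)).mulVec r i

lemma algebraMap_conjTranspose {n : ℕ} (a : ℂ) :
    ((algebraMap ℂ (Matrix (Fin n) (Fin n) ℂ)) a)ᴴ = algebraMap ℂ _ (star a) := by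
  simp [Matrix.algebraMap_eq_diagonal, Matrix.diagonal_conjTranspose]

lemma aeval_conjTranspose' {n : ℕ} (A : Matrix (Fin n) (Fin n) ℂ) (q : ℂ[X]) :
    aeval Aᴴ (q.map (starRingEnd ℂ)) = (aeval A q)ᴴ := by
  induction q using Polynomial.induction_on' with
  | add p q hp hq => simp [Polynomial.map_add, hp, hq]
  | monomial k a =>
    rw [Polynomial.map_monomial, aeval_monomial, aeval_monomial, conjTranspose_mul,
      conjTranspose_pow, algebraMap_conjTranspose, Algebra.commutes]
    rfl

lemma commute_aeval_conjTranspose {n : ℕ} (A : Matrix (Fin n) (Fin n) ℂ)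
    (hnormal : A * Aᴴ = Aᴴ * A) (s t : ℂ[X]) :
    Commute (aeval A s) (aeval Aᴴ t) := by
  have h : Commute A Aᴴ := hnormal
  induction s using Polynomial.induction_on' with
  | add p q hp hq => simpa [map_add] using hp.add_left hq
  | monomial k a =>
    induction t using Polynomial.induction_on' with
    | add p q hp hq => simpa [map_add] using hp.add_right hq
    | monomial j b =>
      rw [aeval_monomial, aeval_monomial]
      exact (Algebra.commute_algebraMap_left a _).mul_left
        (((Algebra.commute_algebraMap_left b _).symm).mul_right (h.pow_pow k j))

lemma enorm_eq_sqrt {n : ℕ} (v : Fin n → ℂ) :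
    euclNorm v = Real.sqrt (star v ⬝ᵥ v).re := by
  rw [euclNorm, EuclideanSpace.norm_eq]
  congr 1
  rw [dotProduct, Complex.re_sum]
  refine Finset.sum_congr rfl fun i _ => ?_
  have : (star v) i * v i = ((Complex.normSq (v i) : ℝ) : ℂ) := by
    rw [Pi.star_apply, Complex.star_def, mul_comm, Complex.mul_conj]
  rw [this, Complex.ofReal_re, ← Complex.sq_norm]
  rfl

lemma enorm_conjTranspose_mulVec {n : ℕ} (B : Matrix (Fin n) (Fin n) ℂ)
    (h : B * Bᴴ = Bᴴ * B) (r : Fin n → ℂ) :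
    euclNorm (Bᴴ.mulVec r) = euclNorm (B.mulVec r) := by
  rw [enorm_eq_sqrt, enorm_eq_sqrt]
  congr 2
  rw [star_mulVec, star_mulVec, dotProduct_mulVec, dotProduct_mulVec,
    vecMul_vecMul, vecMul_vecMul, conjTranspose_conjTranspose, h]

/-- If `p` is a GMRES minimizing polynomial for a normal matrix `A` and `r₀`, then the
conjugated polynomial `p̄` is a GMRES minimizing polynomial for `Aᴴ` and `r₀`. -/
theorem conj_poly_is_gmres_minimizer_conjTranspose {n : ℕ} (m : ℕ) (hm : 1 ≤ m)
    (A : Matrix (Fin n) (Fin n) ℂ) (hnormal : A * Aᴴ = Aᴴ * A)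
    (r₀ : Fin n → ℂ) (p : ℂ[X]) (hdeg : p.natDegree ≤ m) (hp0 : p.eval 0 = 1)
    (hmin : ∀ q : ℂ[X], q.natDegree ≤ m → q.eval 0 = 1 →
      euclNorm ((aeval A p).mulVec r₀) ≤ euclNorm ((aeval A q).mulVec r₀)) :
    (p.map (starRingEnd ℂ)).natDegree ≤ m ∧ (p.map (starRingEnd ℂ)).eval 0 = 1 ∧
      ∀ q : ℂ[X], q.natDegree ≤ m → q.eval 0 = 1 →
        euclNorm ((aeval Aᴴ (p.map (starRingEnd ℂ))).mulVec r₀) ≤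
          euclNorm ((aeval Aᴴ q).mulVec r₀) := by
  have hdegmap : ∀ q : ℂ[X], (q.map (starRingEnd ℂ)).natDegree = q.natDegree := fun q =>
    Polynomial.natDegree_map (starRingEnd ℂ)
  have hevalmap : ∀ q : ℂ[X], (q.map (starRingEnd ℂ)).eval 0 = star (q.eval 0) := fun q => by
    rw [← coeff_zero_eq_eval_zero, ← coeff_zero_eq_eval_zero, Polynomial.coeff_map]; rfl
  have hnorm : ∀ q : ℂ[X], euclNorm ((aeval Aᴴ (q.map (starRingEnd ℂ))).mulVec r₀)
      = euclNorm ((aeval A q).mulVec r₀) := by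
    intro q
    rw [aeval_conjTranspose']
    apply enorm_conjTranspose_mulVec
    have h1 : (aeval A q)ᴴ = aeval Aᴴ (q.map (starRingEnd ℂ)) := (aeval_conjTranspose' A q).symm
    rw [h1]
    exact (commute_aeval_conjTranspose A hnormal q _).eq
  refine ⟨(hdegmap p).le.trans hdeg, by rw [hevalmap, hp0]; simp, fun q hq hq0 => ?_⟩
  have hq' : (q.map (starRingEnd ℂ)).natDegree ≤ m := (hdegmap q).le.trans hq
  have hq0' : (q.map (starRingEnd ℂ)).eval 0 = 1 := by rw [hevalmap, hq0]; simp
  have key := hmin (q.map (starRingEnd ℂ)) hq' hq0'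
  have hqq : (q.map (starRingEnd ℂ)).map (starRingEnd ℂ) = q := by
    rw [Polynomial.map_map]
    simp [Complex.conj_conj]
  calc euclNorm ((aeval Aᴴ (p.map (starRingEnd ℂ))).mulVec r₀)
      = euclNorm ((aeval A p).mulVec r₀) := hnorm p
    _ ≤ euclNorm ((aeval A (q.map (starRingEnd ℂ))).mulVec r₀) := key
    _ = euclNorm ((aeval Aᴴ q).mulVec r₀) := by
        rw [← hnorm (q.map (starRingEnd ℂ)), hqq]
end

section
/- Let A be an n×n complex normal invertible matrix and let 1 ≤ m ≤ n−1. Let r_{k−1} ∈ ℂⁿ, let r_k be a nonzero GMRES(m) residual of A from r_{k−1}, and let r̂_{k+1} be a nonzero GMRES(m) residual of Aᴴ from r_k. Then ‖r_k‖² ≤ ‖r_{k−1}‖ · ‖r̂_{k+1}‖ (equivalently, ‖r_k‖/‖r_{k−1}‖ ≤ ‖r̂_{k+1}‖/‖r_k‖). -/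
open Polynomial Matrix

namespace GMRESAux

local notation "⟪" x ", " y "⟫" => @inner ℂ _ _ x y

/-- The canonical linear embedding into Euclidean space. -/
noncomputable def f {n : ℕ} (v : Fin n → ℂ) : EuclideanSpace ℂ (Fin n) :=
  (WithLp.equiv 2 (Fin n → ℂ)).symm v

lemma enorm_eq {n : ℕ} (v : Fin n → ℂ) : euclNorm v = ‖f v‖ := rfl

lemma f_add {n : ℕ} (v w : Fin n → ℂ) : f (v + w) = f v + f w := rfl

lemma f_smul {n : ℕ} (c : ℂ) (v : Fin n → ℂ) : f (c • v) = c • f v := rfl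

lemma f_sum {n : ℕ} {ι : Type*} (s : Finset ι) (v : ι → Fin n → ℂ) :
    f (∑ j ∈ s, v j) = ∑ j ∈ s, f (v j) := by
  classical
  induction s using Finset.induction_on with
  | empty => rfl
  | insert _ _ h ih => simp only [Finset.sum_insert h, f_add, ih]

lemma inner_f {n : ℕ} (x y : Fin n → ℂ) : ⟪f x, f y⟫ = dotProduct (star x) y := by
  simp [f, PiLp.inner_apply, dotProduct, mul_comm]

/-- Adjoint property of conjugate transpose. -/
lemma inner_conjTranspose {n : ℕ} (M : Matrix (Fin n) (Fin n) ℂ) (x y : Fin n → ℂ) :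
    ⟪f (Mᴴ *ᵥ x), f y⟫ = ⟪f x, f (M *ᵥ y)⟫ := by
  rw [inner_f, inner_f, Matrix.star_mulVec, Matrix.conjTranspose_conjTranspose,
    Matrix.dotProduct_mulVec]

/-- If `s` has minimal norm on the line `s + ℂ v`, then `v ⊥ s`. -/
lemma inner_eq_zero_of_min {E : Type*} [NormedAddCommGroup E] [InnerProductSpace ℂ E]
    (s v : E) (h : ∀ c : ℂ, ‖s‖ ≤ ‖s + c • v‖) : ⟪v, s⟫ = 0 := by
  by_contra hne
  have hv : v ≠ 0 := by rintro rfl; simp at hne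
  have hvne : ‖v‖ ≠ 0 := norm_ne_zero_iff.mpr hv
  have hvpos : (0:ℝ) < ‖v‖ ^ 2 := pow_pos (norm_pos_iff.mpr hv) 2
  set a : ℂ := ⟪v, s⟫ with ha
  set c : ℂ := -(a / ((‖v‖ ^ 2 : ℝ) : ℂ)) with hc
  have hsv : (⟪s, v⟫ : ℂ) = (starRingEnd ℂ) a := (inner_conj_symm s v).symm
  have hre : RCLike.re (⟪s, c • v⟫ : ℂ) = -(‖a‖ ^ 2 / ‖v‖ ^ 2) := by
    rw [inner_smul_right, hsv, hc]
    have key : -(a / ((‖v‖ ^ 2 : ℝ) : ℂ)) * (starRingEnd ℂ) a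
        = (((-(‖a‖ ^ 2 / ‖v‖ ^ 2)) : ℝ) : ℂ) := by
      rw [neg_mul, div_mul_eq_mul_div, Complex.mul_conj]
      push_cast [Complex.normSq_eq_norm_sq]
      ring
    rw [key]; exact RCLike.ofReal_re _
  have hcnorm : ‖c‖ = ‖a‖ / ‖v‖ ^ 2 := by
    rw [hc, norm_neg, norm_div]
    congr 1
    rw [Complex.norm_real]
    exact abs_of_nonneg hvpos.le
  have hsq : ‖s + c • v‖ ^ 2 = ‖s‖ ^ 2 - ‖a‖ ^ 2 / ‖v‖ ^ 2 := by
    rw [@norm_add_sq ℂ _ _ _ _ s (c • v), hre, norm_smul, hcnorm]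
    field_simp
    ring
  have hle : ‖s‖ ^ 2 ≤ ‖s + c • v‖ ^ 2 := pow_le_pow_left₀ (norm_nonneg s) (h c) 2
  rw [hsq] at hle
  have hapos : 0 < ‖a‖ ^ 2 / ‖v‖ ^ 2 :=
    div_pos (pow_pos (norm_pos_iff.mpr hne) 2) hvpos
  linarith

/-- Expansion of a GMRES residual as a sum of Krylov vectors. -/
lemma residual_expansion {n m : ℕ} {A : Matrix (Fin n) (Fin n) ℂ} {r s : Fin n → ℂ}
    {p : ℂ[X]} (hdeg : p.natDegree ≤ m) (hs : s = (aeval A p).mulVec r) :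
    s = ∑ j ∈ Finset.range (m + 1), p.coeff j • ((A ^ j) *ᵥ r) := by
  rw [hs, aeval_eq_sum_range' (Nat.lt_succ_of_le hdeg)]
  have key : ∀ (t : Finset ℕ), (∑ j ∈ t, p.coeff j • A ^ j) *ᵥ r
      = ∑ j ∈ t, p.coeff j • ((A ^ j) *ᵥ r) := by
    intro t
    classical
    induction t using Finset.induction_on with
    | empty => simp
    | insert _ _ h ih =>
      rw [Finset.sum_insert h, Finset.sum_insert h, Matrix.add_mulVec, ih,
        Matrix.smul_mulVec]
  exact key _

/-- The orthogonality property of a GMRES residual. -/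
lemma gmres_orth {n m : ℕ} {A : Matrix (Fin n) (Fin n) ℂ} {r s : Fin n → ℂ}
    (h : IsGMRESResidual m A r s) {j : ℕ} (hj1 : 1 ≤ j) (hjm : j ≤ m) :
    ⟪f ((A ^ j) *ᵥ r), f s⟫ = 0 := by
  obtain ⟨p, hdeg, h0, hs, hmin⟩ := h
  apply inner_eq_zero_of_min
  intro c
  have hq1 : (p + C c * X ^ j).natDegree ≤ m := by
    refine le_trans (natDegree_add_le _ _) (max_le hdeg ?_)
    calc (C c * X ^ j).natDegree ≤ j := natDegree_C_mul_X_pow_le c j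
    _ ≤ m := hjm
  have hq2 : (p + C c * X ^ j).eval 0 = 1 := by
    simp [h0, zero_pow (by omega : j ≠ 0)]
  have hle := hmin _ hq1 hq2
  have heval : (aeval A (p + C c * X ^ j)).mulVec r = s + c • ((A ^ j) *ᵥ r) := by
    rw [map_add, Matrix.add_mulVec, ← hs]
    congr 1
    rw [_root_.map_mul, aeval_C, map_pow, aeval_X, ← Algebra.smul_def,
      Matrix.smul_mulVec]
  rw [heval] at hle
  exact hle

end GMRESAux

open GMRESAux in
/-- For a normal invertible `A`: if `r_k` is a nonzero GMRES(m) residual of `A` from `r_{k-1}`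
and `r̂_{k+1}` is a nonzero GMRES(m) residual of `Aᴴ` from `r_k`, then
`‖r_k‖² ≤ ‖r_{k-1}‖ ‖r̂_{k+1}‖`. -/
theorem sq_norm_le_of_gmres_residuals {n : ℕ} (m : ℕ) (hm : 1 ≤ m) (hmn : m ≤ n - 1)
    (A : Matrix (Fin n) (Fin n) ℂ) (hnormal : A * Aᴴ = Aᴴ * A) (hA : IsUnit A)
    (rkm1 rk rhat : Fin n → ℂ)
    (h1 : IsGMRESResidual m A rkm1 rk) (hrk : rk ≠ 0)
    (h2 : IsGMRESResidual m Aᴴ rk rhat) (hrhat : rhat ≠ 0) :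
    euclNorm rk ^ 2 ≤ euclNorm rkm1 * euclNorm rhat := by
  classical
  obtain ⟨p, hpdeg, hp0, hpk, -⟩ := id h1
  obtain ⟨q, hqdeg, hq0, hqk, -⟩ := id h2
  have orth1 : ∀ j : ℕ, 1 ≤ j → j ≤ m →
      (inner (𝕜 := ℂ) (f ((A ^ j) *ᵥ rkm1)) (f rk)) = 0 := fun j hj1 hjm =>
    gmres_orth h1 hj1 hjm
  have exp1 := residual_expansion hpdeg hpk
  have exp2 := residual_expansion hqdeg hqk
  -- Step 1 : ⟪rk, rk⟫ = ⟪rk, rkm1⟫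
  have step1 : (inner (𝕜 := ℂ) (f rk) (f rk)) = inner (𝕜 := ℂ) (f rk) (f rkm1) := by
    nth_rewrite 2 [exp1]
    rw [f_sum, inner_sum, Finset.sum_eq_single 0]
    · simp [f_smul, inner_smul_right, Polynomial.coeff_zero_eq_eval_zero, hp0,
        Matrix.one_mulVec]
    · intro j hjmem hj0
      have hjm : j ≤ m := Nat.lt_succ_iff.mp (Finset.mem_range.mp hjmem)
      rw [f_smul, inner_smul_right, ← inner_conj_symm, orth1 j (by omega) hjm,
        map_zero, mul_zero]
    · intro h; exact absurd (Finset.mem_range.mpr (by omega)) h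
  -- Step 2 : ⟪rhat, rkm1⟫ = ⟪rk, rkm1⟫
  have step2 : (inner (𝕜 := ℂ) (f rhat) (f rkm1)) = inner (𝕜 := ℂ) (f rk) (f rkm1) := by
    nth_rewrite 1 [exp2]
    rw [f_sum, sum_inner, Finset.sum_eq_single 0]
    · simp [f_smul, inner_smul_left, Polynomial.coeff_zero_eq_eval_zero, hq0,
        Matrix.one_mulVec]
    · intro j hjmem hj0
      have hjm : j ≤ m := Nat.lt_succ_iff.mp (Finset.mem_range.mp hjmem)
      have hz : (inner (𝕜 := ℂ) (f ((Aᴴ ^ j) *ᵥ rk)) (f rkm1)) = 0 := by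
        rw [← Matrix.conjTranspose_pow, inner_conjTranspose, ← inner_conj_symm,
          orth1 j (by omega) hjm, map_zero]
      rw [f_smul, inner_smul_left, hz, mul_zero]
    · intro h; exact absurd (Finset.mem_range.mpr (by omega)) h
  -- conclude
  have hnorm : euclNorm rk ^ 2 = RCLike.re (inner (𝕜 := ℂ) (f rk) (f rk)) := by
    rw [enorm_eq, @inner_self_eq_norm_sq ℂ]
  rw [hnorm, step1, ← step2]
  calc RCLike.re (inner (𝕜 := ℂ) (f rhat) (f rkm1))
      ≤ ‖(inner (𝕜 := ℂ) (f rhat) (f rkm1))‖ := RCLike.re_le_norm _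
    _ ≤ ‖f rhat‖ * ‖f rkm1‖ := norm_inner_le_norm _ _
    _ = euclNorm rkm1 * euclNorm rhat := by rw [← enorm_eq, ← enorm_eq]; ring
end

section
/- (Sublinear cycle–convergence of restarted GMRES for normal matrices.) Let A be an n×n complex normal invertible matrix and let 1 ≤ m ≤ n−1. Let r₀, r₁, …, r_q ∈ ℂⁿ be a sequence of nonzero vectors such that for each k = 1, …, q the vector r_k is a GMRES(m) residual of A from r_{k−1}. Then for every k = 1, …, q−1, ‖r_k‖ / ‖r_{k−1}‖ ≤ ‖r_{k+1}‖ / ‖r_k‖ (equivalently, ‖r_k‖² ≤ ‖r_{k−1}‖ · ‖r_{k+1}‖). -/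
open Polynomial Matrix

section Aux

local notation "⟪" x ", " y "⟫" => @inner ℂ _ _ x y

/-- If `y` has minimal norm on the affine line `y + ℂ • v`, then `v ⊥ y`. -/
lemma aux_inner_eq_zero_of_min {E : Type*} [NormedAddCommGroup E] [InnerProductSpace ℂ E]
    (y v : E) (h : ∀ t : ℂ, ‖y‖ ≤ ‖y + t • v‖) : ⟪v, y⟫ = 0 := by
  by_cases hv : v = 0
  · simp [hv]
  by_contra hne
  have hv2 : (0:ℝ) < ‖v‖ ^ 2 := pow_pos (norm_pos_iff.mpr hv) 2
  have hc2 : (0:ℝ) < ‖⟪v, y⟫‖ ^ 2 := pow_pos (norm_pos_iff.mpr hne) 2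
  set t : ℂ := -(⟪v, y⟫ / ((‖v‖ : ℂ) ^ 2)) with ht
  have h1 : ‖y‖ ^ 2 ≤ ‖y + t • v‖ ^ 2 := by
    have := h t
    nlinarith [norm_nonneg y, norm_nonneg (y + t • v)]
  have h2 : ‖y + t • v‖ ^ 2 = ‖y‖ ^ 2 + 2 * RCLike.re ⟪y, t • v⟫ + ‖t • v‖ ^ 2 :=
    norm_add_sq y (t • v)
  have hyv : ⟪y, v⟫ = starRingEnd ℂ ⟪v, y⟫ := (inner_conj_symm y v).symm
  have h4 : RCLike.re ⟪y, t • v⟫ = -(‖⟪v, y⟫‖ ^ 2 / ‖v‖ ^ 2) := by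
    have h3 : ⟪y, t • v⟫ = -((‖⟪v, y⟫‖ ^ 2 / ‖v‖ ^ 2 : ℝ) : ℂ) := by
      rw [inner_smul_right, hyv, ht, neg_mul, div_mul_eq_mul_div, Complex.mul_conj']
      push_cast
      ring
    rw [h3]
    simp only [map_neg, neg_inj, RCLike.re_eq_complex_re]
    rw [Complex.ofReal_re]
  have h5 : ‖t • v‖ ^ 2 = ‖⟪v, y⟫‖ ^ 2 / ‖v‖ ^ 2 := by
    rw [norm_smul]
    have htn : ‖t‖ = ‖⟪v, y⟫‖ / ‖v‖ ^ 2 := by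
      rw [ht, norm_neg, norm_div]
      congr 1
      rw [norm_pow, Complex.norm_real, Real.norm_eq_abs, abs_of_nonneg (norm_nonneg v)]
    rw [htn]
    field_simp
  rw [h2, h4, h5] at h1
  have : ‖⟪v, y⟫‖ ^ 2 / ‖v‖ ^ 2 > 0 := div_pos hc2 hv2
  linarith

end Aux

/-- Sublinear cycle–convergence of restarted GMRES for normal matrices: the residual-norm
reduction in one cycle cannot be better than in the previous cycle. -/
theorem gmres_cycle_convergence_sublinear {n : ℕ} (m q : ℕ) (hm : 1 ≤ m) (hmn : m ≤ n - 1)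
    (A : Matrix (Fin n) (Fin n) ℂ) (hnormal : A * Aᴴ = Aᴴ * A) (hA : IsUnit A)
    (r : ℕ → Fin n → ℂ) (hr : ∀ k ≤ q, r k ≠ 0)
    (hres : ∀ k < q, IsGMRESResidual m A (r k) (r (k + 1))) :
    ∀ k, 1 ≤ k → k < q →
      euclNorm (r k) / euclNorm (r (k - 1)) ≤ euclNorm (r (k + 1)) / euclNorm (r k) := by
  classical
  intro k hk1 hkq
  set e : (Fin n → ℂ) → EuclideanSpace ℂ (Fin n) :=
    fun v => (WithLp.equiv 2 (Fin n → ℂ)).symm v with he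
  have henorm : ∀ v : Fin n → ℂ, euclNorm v = ‖e v‖ := fun v => rfl
  have hinner : ∀ v w : Fin n → ℂ, (inner ℂ (e v) (e w) : ℂ) = star v ⬝ᵥ w := fun v w =>
    (EuclideanSpace.inner_toLp_toLp v w).trans (dotProduct_comm _ _)
  have hzero : ∀ v : Fin n → ℂ, v ≠ 0 → 0 < euclNorm v := by
    intro v hv
    rw [henorm, norm_pos_iff]
    intro h
    apply hv
    simpa [he, WithLp.equiv_symm_apply] using h
  obtain ⟨p, hpdeg, hp0, hpx, hpmin⟩ := hres (k - 1) (by omega)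
  obtain ⟨p', hqdeg, hq0, hqs, -⟩ := hres k hkq
  have hk : k - 1 + 1 = k := by omega
  rw [hk] at hpx hpmin
  set u := r (k - 1) with hu
  set x := r k with hx
  -- orthogonality of x to A^j u for 1 ≤ j ≤ m
  have horth : ∀ j, 1 ≤ j → j ≤ m → star x ⬝ᵥ (A ^ j *ᵥ u) = 0 := by
    intro j hj1 hjm
    have hmin : ∀ t : ℂ, ‖e x‖ ≤ ‖e x + t • e (A ^ j *ᵥ u)‖ := by
      intro t
      have hdeg : (p + C t * X ^ j).natDegree ≤ m := by
        refine (natDegree_add_le _ _).trans (max_le hpdeg ?_)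
        exact (natDegree_C_mul_le _ _).trans ((natDegree_X_pow _).le.trans hjm)
      have heval : (p + C t * X ^ j).eval 0 = 1 := by
        simp [hp0, zero_pow (by omega : j ≠ 0)]
      have hval : (aeval A (p + C t * X ^ j)).mulVec u = x + t • (A ^ j *ᵥ u) := by
        rw [map_add, add_mulVec, ← hpx]
        congr 1
        rw [_root_.map_mul, aeval_C, aeval_X_pow, ← Algebra.smul_def, smul_mulVec]
      have := hpmin (p + C t * X ^ j) hdeg heval
      rw [hval] at this
      have hadd : e (x + t • (A ^ j *ᵥ u)) = e x + t • e (A ^ j *ᵥ u) := by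
        simp only [he, WithLp.equiv_symm_apply, WithLp.toLp_add, WithLp.toLp_smul]
      rw [henorm, henorm, hadd] at this
      exact this
    have h0 : (inner ℂ (e (A ^ j *ᵥ u)) (e x) : ℂ) = 0 :=
      aux_inner_eq_zero_of_min (e x) (e (A ^ j *ᵥ u)) hmin
    have : (inner ℂ (e x) (e (A ^ j *ᵥ u)) : ℂ) = 0 := by
      rw [← inner_conj_symm, h0, map_zero]
    rwa [hinner] at this
  -- key dot-product computation
  have hdot : ∀ qq : ℂ[X], qq.natDegree ≤ m →
      star x ⬝ᵥ ((aeval A qq) *ᵥ u) = qq.eval 0 * (star x ⬝ᵥ u) := by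
    intro qq hdeg
    rw [aeval_eq_sum_range]
    have hsum : (∑ i ∈ Finset.range (qq.natDegree + 1), qq.coeff i • A ^ i) *ᵥ u
        = ∑ i ∈ Finset.range (qq.natDegree + 1), (qq.coeff i • A ^ i) *ᵥ u :=
      map_sum (mulVec.addMonoidHomLeft u) _ _
    rw [hsum]
    simp only [smul_mulVec]
    have hsum2 : star x ⬝ᵥ (∑ i ∈ Finset.range (qq.natDegree + 1), qq.coeff i • (A ^ i *ᵥ u))
        = ∑ i ∈ Finset.range (qq.natDegree + 1), star x ⬝ᵥ (qq.coeff i • (A ^ i *ᵥ u)) :=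
      map_sum (AddMonoidHom.mk' (fun w => star x ⬝ᵥ w) fun a b => dotProduct_add (star x) a b) _ _
    rw [hsum2]
    rw [Finset.sum_eq_single 0]
    · simp [coeff_zero_eq_eval_zero, smul_eq_mul]
    · intro i hi hi0
      rw [dotProduct_smul, horth i (by omega) (by
        simp only [Finset.mem_range] at hi; omega), smul_zero]
    · intro h
      simp at h
  -- step 2: ⟨x, x⟩ = ⟨x, u⟩
  have key1 : star x ⬝ᵥ x = star x ⬝ᵥ u := by
    have := hdot p hpdeg
    rw [← hpx, hp0, one_mul] at this
    exact this
  set B : Matrix (Fin n) (Fin n) ℂ := aeval A p' with hB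
  have key2 : star x ⬝ᵥ (B *ᵥ u) = star x ⬝ᵥ u := by
    have := hdot p' hqdeg
    rw [hq0, one_mul] at this
    exact this
  -- B is normal
  have hAc : Commute Aᴴ A := hnormal.symm
  have hBA : Commute Aᴴ B := by
    rw [hB, aeval_eq_sum_range]
    exact Commute.sum_right _ _ _ fun i _ => (hAc.pow_right i).smul_right _
  have hBH : Bᴴ = ∑ i ∈ Finset.range (p'.natDegree + 1),
      (starRingEnd ℂ) (p'.coeff i) • (Aᴴ) ^ i := by
    rw [hB, aeval_eq_sum_range, conjTranspose_sum]
    refine Finset.sum_congr rfl fun i _ => ?_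
    rw [conjTranspose_smul, conjTranspose_pow]
    rfl
  have hcomm : B * Bᴴ = Bᴴ * B := by
    have : Commute B Bᴴ := by
      rw [hBH]
      exact Commute.sum_right _ _ _ fun i _ => ((hBA.symm.pow_right i).smul_right _)
    exact this
  -- norms of Bᴴ x and B x agree
  have hdoteq : star (Bᴴ *ᵥ x) ⬝ᵥ (Bᴴ *ᵥ x) = star (B *ᵥ x) ⬝ᵥ (B *ᵥ x) := by
    rw [star_mulVec, star_mulVec, conjTranspose_conjTranspose]
    rw [← dotProduct_mulVec, ← dotProduct_mulVec, mulVec_mulVec, mulVec_mulVec, hcomm]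
  have hnormBeq : euclNorm (Bᴴ *ᵥ x) = euclNorm (B *ᵥ x) := by
    rw [henorm, henorm, norm_eq_sqrt_re_inner (𝕜 := ℂ) _, norm_eq_sqrt_re_inner (𝕜 := ℂ) _]
    congr 1
    rw [hinner, hinner, hdoteq]
  -- the central inequality
  have hBHxu : (inner ℂ (e (Bᴴ *ᵥ x)) (e u) : ℂ) = star x ⬝ᵥ u := by
    rw [hinner, star_mulVec, conjTranspose_conjTranspose, ← dotProduct_mulVec, key2]
  have hmain : euclNorm x ^ 2 ≤ euclNorm (r (k + 1)) * euclNorm u := by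
    have h10 : (inner ℂ (e x) (e x) : ℂ) = inner ℂ (e (Bᴴ *ᵥ x)) (e u) := by
      rw [hBHxu, hinner, key1]
    have hnn : euclNorm x ^ 2 = ‖(inner ℂ (e (Bᴴ *ᵥ x)) (e u) : ℂ)‖ := by
      rw [← h10, inner_self_eq_norm_sq_to_K (𝕜 := ℂ) (e x), henorm]
      rw [norm_pow, RCLike.norm_ofReal, abs_of_nonneg (norm_nonneg _)]
    rw [hnn]
    calc ‖(inner ℂ (e (Bᴴ *ᵥ x)) (e u) : ℂ)‖ ≤ ‖e (Bᴴ *ᵥ x)‖ * ‖e u‖ :=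
          norm_inner_le_norm _ _
      _ = euclNorm (B *ᵥ x) * euclNorm u := by rw [← henorm, ← henorm, hnormBeq]
      _ = euclNorm (r (k + 1)) * euclNorm u := by rw [hqs]
  -- conclude
  have hupos : 0 < euclNorm u := hzero u (hr (k - 1) (by omega))
  have hxpos : 0 < euclNorm x := hzero x (hr k (by omega))
  rw [div_le_div_iff₀ hupos hxpos]
  nlinarith [hmain]
end
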